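/- The constant 2 in the inequality ‖Δ(M)‖ ≤ 2‖M‖ is sharp: for every p ≥ 2, the matrix M = 1_p 1_p^⊤ − (p/2) I_p satisfies ‖Δ(M)‖/‖M‖ = 2 − 2/p. Consequently, for any ε > 0 there exists a symmetric matrix M with ‖Δ(M)‖ > (2−ε)‖M‖. -/

import Mathlib

open scoped Matrix.Norms.L2Operator

/-- `offDiag' M` is the matrix `M` with all diagonal entries set to zero. -/
def Matrix.offDiag' {p : ℕ} (M : Matrix (Fin p) (Fin p) ℝ) : Matrix (Fin p) (Fin p) ℝ :=
  fun i j => if i = j then 0 else M i j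

open Matrix


lemma JsubC_mulVec {p : ℕ} (c : ℝ) (x : Fin p → ℝ) :
    (Matrix.of (fun _ _ => (1:ℝ)) - c • (1 : Matrix (Fin p) (Fin p) ℝ)) *ᵥ x
      = fun i => (∑ j, x j) - c * x i := by
  funext i
  simp [Matrix.sub_mulVec, Matrix.smul_mulVec, Matrix.mulVec, dotProduct,
    Matrix.one_mulVec, Matrix.one_apply, mul_sub, Finset.sum_sub_distrib, mul_ite,
    mul_comm]

lemma expand_sum {p : ℕ} (c : ℝ) (x : Fin p → ℝ) :
    ∑ i, ((∑ j, x j) - c * x i)^2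
      = ((p : ℝ) - 2*c) * (∑ j, x j)^2 + c^2 * ∑ i, (x i)^2 := by
  have h : ∀ i : Fin p, ((∑ j, x j) - c * x i)^2
      = (∑ j, x j)^2 - 2*c*(∑ j, x j)*x i + c^2*(x i)^2 := fun i => by ring
  simp_rw [h]
  rw [Finset.sum_add_distrib, Finset.sum_sub_distrib, Finset.sum_const, ← Finset.mul_sum,
    ← Finset.mul_sum]
  simp [Finset.card_univ]
  ring

lemma l2norm_JsubC {p : ℕ} (hp : 0 < p) (c K : ℝ) (hK : 0 ≤ K)
    (hub : ∀ x : Fin p → ℝ, ∑ i, ((∑ j, x j) - c * x i)^2 ≤ K^2 * ∑ i, (x i)^2)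
    (x₀ : Fin p → ℝ) (hx₀ : x₀ ≠ 0)
    (hlb : ∑ i, ((∑ j, x₀ j) - c * x₀ i)^2 = K^2 * ∑ i, (x₀ i)^2) :
    ‖(Matrix.of (fun _ _ => (1:ℝ)) - c • (1 : Matrix (Fin p) (Fin p) ℝ))‖ = K := by
  set M := Matrix.of (fun _ _ => (1:ℝ)) - c • (1 : Matrix (Fin p) (Fin p) ℝ) with hM
  rw [Matrix.l2_opNorm_def]
  set T := (Matrix.toEuclideanLin.trans LinearMap.toContinuousLinearMap) M with hT
  have hTx : ∀ x : EuclideanSpace ℝ (Fin p), ‖T x‖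
      = Real.sqrt (∑ i, ((∑ j, x j) - c * x i)^2) := by
    intro x
    have : (T x : EuclideanSpace ℝ (Fin p)) = (WithLp.equiv 2 (Fin p → ℝ)).symm (M *ᵥ x) := rfl
    rw [this, EuclideanSpace.norm_eq]
    congr 1
    refine Finset.sum_congr rfl fun i _ => ?_
    rw [JsubC_mulVec]
    simp [Real.norm_eq_abs, sq_abs]
  have hnorm : ∀ x : EuclideanSpace ℝ (Fin p), ‖x‖ = Real.sqrt (∑ i, (x i)^2) := by
    intro x
    rw [EuclideanSpace.norm_eq]
    congr 1
    exact Finset.sum_congr rfl fun i _ => by simp [Real.norm_eq_abs, sq_abs]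
  apply le_antisymm
  · refine ContinuousLinearMap.opNorm_le_bound _ hK fun x => ?_
    rw [hTx, hnorm]
    calc Real.sqrt (∑ i, ((∑ j, x j) - c * x i)^2)
        ≤ Real.sqrt (K^2 * ∑ i, (x i)^2) := Real.sqrt_le_sqrt (hub x)
      _ = K * Real.sqrt (∑ i, (x i)^2) := by
          rw [Real.sqrt_mul (sq_nonneg K), Real.sqrt_sq hK]
  · have h := T.ratio_le_opNorm ((WithLp.equiv 2 (Fin p → ℝ)).symm x₀)
    have hx : ((WithLp.equiv 2 (Fin p → ℝ)).symm x₀ : EuclideanSpace ℝ (Fin p)) = x₀ := rfl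
    rw [hTx, hnorm, hx, hlb, Real.sqrt_mul (sq_nonneg K), Real.sqrt_sq hK] at h
    have hs : 0 < Real.sqrt (∑ i, (x₀ i)^2) := by
      have : (0:ℝ) < ∑ i, (x₀ i)^2 := by
        rcases Function.ne_iff.mp hx₀ with ⟨i, hi⟩
        simp only [Pi.zero_apply] at hi
        have : (0:ℝ) < (x₀ i)^2 := by positivity
        exact Finset.sum_pos' (fun j _ => sq_nonneg _) ⟨i, Finset.mem_univ i, this⟩
      exact Real.sqrt_pos.mpr this
    rw [mul_div_assoc, div_self hs.ne', mul_one] at h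
    exact h

lemma norm_JI {p : ℕ} (hp : 2 ≤ p) :
    ‖(Matrix.of (fun _ _ => (1:ℝ)) - (1:ℝ) • (1 : Matrix (Fin p) (Fin p) ℝ))‖ = (p:ℝ) - 1 := by
  have hp' : (2:ℝ) ≤ p := by exact_mod_cast hp
  refine l2norm_JsubC (by omega) 1 ((p:ℝ)-1) (by linarith) (fun x => ?_) (fun _ => 1) ?_ ?_
  · rw [expand_sum]
    have hcs : (∑ j, x j)^2 ≤ (p:ℝ) * ∑ i, (x i)^2 := by
      have := sq_sum_le_card_mul_sum_sq (s := Finset.univ) (f := x)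
      simpa [Finset.card_univ] using this
    have hq : (0:ℝ) ≤ ∑ i, (x i)^2 := Finset.sum_nonneg fun i _ => sq_nonneg _
    nlinarith
  · intro h
    have := congrFun h ⟨0, by omega⟩
    simp at this
  · rw [expand_sum]
    simp [Finset.card_univ]
    ring

lemma norm_Jhalf {p : ℕ} (hp : 2 ≤ p) :
    ‖(Matrix.of (fun _ _ => (1:ℝ)) - ((p:ℝ)/2) • (1 : Matrix (Fin p) (Fin p) ℝ))‖ = (p:ℝ)/2 := by
  have hp' : (2:ℝ) ≤ p := by exact_mod_cast hp
  refine l2norm_JsubC (by omega) ((p:ℝ)/2) ((p:ℝ)/2) (by linarith) (fun x => ?_) (fun _ => 1) ?_ ?_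
  · rw [expand_sum]
    have : (p:ℝ) - 2*((p:ℝ)/2) = 0 := by ring
    rw [this]
    simp
  · intro h
    have := congrFun h ⟨0, by omega⟩
    simp at this
  · rw [expand_sum]
    have : (p:ℝ) - 2*((p:ℝ)/2) = 0 := by ring
    rw [this]
    simp

lemma offDiag'_eq {p : ℕ} :
    Matrix.offDiag' (Matrix.of (fun _ _ => (1:ℝ)) - ((p:ℝ)/2) • (1 : Matrix (Fin p) (Fin p) ℝ))
      = Matrix.of (fun _ _ => (1:ℝ)) - (1:ℝ) • (1 : Matrix (Fin p) (Fin p) ℝ) := by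
  funext i j
  simp only [Matrix.offDiag', Matrix.sub_apply, Matrix.smul_apply, Matrix.of_apply,
    Matrix.one_apply, smul_eq_mul]
  split <;> simp [*]

/-- Sharpness of the factor 2 in `‖Δ(M)‖ ≤ 2‖M‖` : for every `p ≥ 2`, the matrix
`M = 1ₚ1ₚᵀ − (p/2) Iₚ` satisfies `‖Δ(M)‖ / ‖M‖ = 2 − 2/p`; consequently, for any `ε > 0`
there is a symmetric matrix `M` with `‖Δ(M)‖ > (2 − ε) ‖M‖`. -/
theorem offDiag_l2OpNorm_two_sharp :
    (∀ p : ℕ, 2 ≤ p →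
      ∀ M : Matrix (Fin p) (Fin p) ℝ,
        M = Matrix.of (fun _ _ => (1 : ℝ)) - ((p : ℝ) / 2) • (1 : Matrix (Fin p) (Fin p) ℝ) →
        ‖Matrix.offDiag' M‖ / ‖M‖ = 2 - 2 / p) ∧
    (∀ ε : ℝ, 0 < ε →
      ∃ (p : ℕ) (M : Matrix (Fin p) (Fin p) ℝ),
        M.IsSymm ∧ (2 - ε) * ‖M‖ < ‖Matrix.offDiag' M‖) := by
  have key : ∀ p : ℕ, 2 ≤ p →
      ∀ M : Matrix (Fin p) (Fin p) ℝ,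
        M = Matrix.of (fun _ _ => (1 : ℝ)) - ((p : ℝ) / 2) • (1 : Matrix (Fin p) (Fin p) ℝ) →
        ‖Matrix.offDiag' M‖ = (p:ℝ) - 1 ∧ ‖M‖ = (p:ℝ)/2 := by
    intro p hp M hM
    subst hM
    exact ⟨by rw [offDiag'_eq, norm_JI hp], norm_Jhalf hp⟩
  constructor
  · intro p hp M hM
    obtain ⟨h1, h2⟩ := key p hp M hM
    have hp' : (2:ℝ) ≤ p := by exact_mod_cast hp
    rw [h1, h2]
    field_simp
  · intro ε hε
    set p : ℕ := ⌈2/ε⌉₊ + 2 with hpdef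
    have hp : 2 ≤ p := by omega
    have hp' : (2:ℝ) ≤ p := by exact_mod_cast hp
    refine ⟨p, Matrix.of (fun _ _ => (1 : ℝ)) - ((p : ℝ) / 2) • (1 : Matrix (Fin p) (Fin p) ℝ),
      ?_, ?_⟩
    · unfold Matrix.IsSymm
      funext i j
      simp only [Matrix.transpose_apply, Matrix.sub_apply, Matrix.smul_apply, Matrix.of_apply,
        Matrix.one_apply, smul_eq_mul]
      congr 1
      congr 1
      simp [eq_comm]
    · obtain ⟨h1, h2⟩ := key p hp _ rfl
      rw [h1, h2]
      have hceil : 2/ε ≤ (⌈2/ε⌉₊ : ℝ) := Nat.le_ceil _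
      have hplt : 2/ε < (p:ℝ) := by
        rw [hpdef]
        push_cast
        linarith
      have h2lt : 2 < ε * p := by
        rw [div_lt_iff₀ hε] at hplt
        linarith [mul_comm ε (p:ℝ)]
      nlinarith
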